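/- Let n ≥ 3, λ ∈ ℝ, and let ρ : M → ℝ be a nonnegative continuous function on a measure space (M, μ) with μ(M) > 0. If the function a₃ = (1/48)(Δh − λ(n−2)(λ²n(n−2) + ρ)) is identically zero for some function h with ∫_M Δh dμ = 0, then λ = 0. -/
import Mathlib


open Real MeasureTheory

/-- Abstract version of Theorem 1(2): if `n ≥ 3`, `ρ ≥ 0` is continuous, and
`a₃ = (1/48)(Δh − λ(n−2)(λ²n(n−2) + ρ))` vanishes identically, where `Δh` is an
integrable function with `∫ Δh = 0`, on a space of positive measure, then `λ = 0`. -/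
theorem a3_vanishing_implies_ricci_flat
    {M : Type*} [TopologicalSpace M] [MeasurableSpace M] [OpensMeasurableSpace M]
    (μ : Measure M) (hμ : 0 < μ Set.univ)
    (n : ℕ) (hn : 3 ≤ n) (lam : ℝ)
    (ρ : M → ℝ) (hρcont : Continuous ρ) (hρnonneg : ∀ x, 0 ≤ ρ x)
    (Δh : M → ℝ) (hΔh_int : Integrable Δh μ) (hΔh : ∫ x, Δh x ∂μ = 0)
    (ha3 : ∀ x : M,
      (1 / 48) * (Δh x - lam * (n - 2) * (lam ^ 2 * n * (n - 2) + ρ x)) = 0) :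
    lam = 0 := by
  by_contra hlam
  have hn2 : (0:ℝ) < (n:ℝ) - 2 := by
    have : (3:ℝ) ≤ (n:ℝ) := by exact_mod_cast hn
    linarith
  have hc : (0:ℝ) < lam * ((n:ℝ) - 2) ∨ lam * ((n:ℝ) - 2) < 0 := by
    rcases lt_trichotomy lam 0 with h | h | h
    · right; exact mul_neg_of_neg_of_pos h hn2
    · exact absurd h hlam
    · left; exact mul_pos h hn2
  have hcne : lam * ((n:ℝ) - 2) ≠ 0 := by rcases hc with h | h <;> [exact ne_of_gt h; exact ne_of_lt h]
  -- Δh x = lam*(n-2)*(f x), f x = lam^2 n (n-2) + ρ x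
  set f : M → ℝ := fun x => lam ^ 2 * n * ((n:ℝ) - 2) + ρ x with hf
  have heq : ∀ x, Δh x = (lam * ((n:ℝ) - 2)) * f x := by
    intro x
    have := ha3 x
    field_simp at this
    simp [hf]
    linarith
  have hfeq : f = fun x => Δh x / (lam * ((n:ℝ) - 2)) := by
    funext x; rw [heq x]; field_simp
  have hfint : Integrable f μ := by
    rw [hfeq]; exact hΔh_int.div_const _
  have hl2 : 0 < lam ^ 2 := lt_of_le_of_ne (sq_nonneg _) (Ne.symm (pow_ne_zero 2 hlam))
  have hfpos : ∀ x, 0 < f x := by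
    intro x
    have hpos : 0 < lam ^ 2 * n * ((n:ℝ) - 2) := by
      have hn0 : (0:ℝ) < (n:ℝ) := by linarith
      positivity
    have := hρnonneg x
    simp only [hf]
    linarith
  have hfint0 : ∫ x, f x ∂μ = 0 := by
    rw [hfeq]
    rw [MeasureTheory.integral_div, hΔh, zero_div]
  have hae : f =ᵐ[μ] 0 := by
    rw [← MeasureTheory.integral_eq_zero_iff_of_nonneg (fun x => (hfpos x).le) hfint]
    exact hfint0
  have : μ Set.univ = 0 := by
    have : ∀ᵐ x ∂μ, False := by
      filter_upwards [hae] with x hx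
      exact absurd hx (ne_of_gt (hfpos x))
    simpa [ae_iff] using this
  exact absurd this (ne_of_gt hμ)
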